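/- (Shafarevich–Tate) Let F₀ be a finite field of characteristic p and let F be the quadratic extension of F₀. Let ψ_p be a nontrivial additive character of F_p and set ψ(x) = ψ_p(Tr_{F/F_p}(x)). Let χ be a nontrivial multiplicative character of F whose restriction to F₀^× is trivial. Then for every x ∈ F^× with Tr_{F/F₀}(x) = 0, one has Σ_{t∈F^×} χ(t)ψ(t) = χ(x)·|F₀|. -/

import Mathlib

attribute [local instance] ZMod.algebra

private lemma sum_units_aux {K : Type*} [Field K] [Fintype K] [DecidableEq K] (g : K → ℂ) :
    ∑ t : K, g t = g 0 + ∑ u : Kˣ, g u := by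
  have h1 : ∑ u : Kˣ, g ↑u = ∑ a : {x : K // x ≠ 0}, g ↑a :=
    Fintype.sum_equiv unitsEquivNeZero _ _ (fun u => rfl)
  have h2 : ∑ a : {x : K // x ≠ 0}, g ↑a = ∑ a ∈ Finset.univ.erase (0 : K), g a :=
    (Finset.sum_subtype _ (by simp) g).symm
  rw [h1, h2, Finset.add_sum_erase _ g (Finset.mem_univ 0)]

/-- (Shafarevich–Tate) Let `F` be the quadratic extension of a finite field `F₀` of
characteristic `p`, let `ψ(x) = ψ_p(Tr_{F/F_p}(x))` for a nontrivial additive character `ψ_p`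
of `F_p`, and let `χ` be a nontrivial multiplicative character of `F` whose restriction to
`F₀^×` is trivial.  Then for every `x ∈ F^×` with `Tr_{F/F₀}(x) = 0` one has
`∑_{t ∈ F^×} χ(t)ψ(t) = χ(x)·|F₀|`. -/
theorem stmt7 (p : ℕ) [Fact p.Prime]
    (F₀ F : Type*) [Field F₀] [Fintype F₀] [Field F] [Fintype F] [DecidableEq F]
    [CharP F p] [Algebra F₀ F] (hquad : Module.finrank F₀ F = 2)
    (ψp : AddChar (ZMod p) ℂ) (hψ : ψp ≠ 1)
    (χ : MulChar F ℂ) (hχ : χ ≠ 1)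
    (hres : ∀ y : F₀ˣ, χ (algebraMap F₀ F y) = 1)
    (x : F) (hx : x ≠ 0) (htr : Algebra.trace F₀ F x = 0) :
    ∑ t : Fˣ, χ t * ψp (Algebra.trace (ZMod p) F t) = χ x * (Fintype.card F₀ : ℂ) := by
  classical
  haveI : CharP F₀ p := by
    have hp0 : ((p : ℕ) : F₀) = 0 := by
      apply (algebraMap F₀ F).injective
      rw [map_natCast, map_zero]
      exact CharP.cast_eq_zero F p
    exact ringChar.of_eq (CharP.ringChar_of_prime_eq_zero Fact.out hp0)
  haveI : IsScalarTower (ZMod p) F₀ F :=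
    IsScalarTower.of_algebraMap_eq' (RingHom.ext_zmod _ _)
  haveI : Algebra.IsAlgebraic (ZMod p) F₀ := Algebra.IsAlgebraic.of_finite _ _
  haveI : Algebra.IsAlgebraic F₀ F := Algebra.IsAlgebraic.of_finite _ _
  set q : ℕ := Fintype.card F₀ with hqdef
  -- ψp takes the value 1 only at 0
  have hψ1 : ∀ c : ZMod p, ψp c = 1 ↔ c = 0 := fun c =>
    (AddChar.IsPrimitive.of_ne_one hψ).zmod_char_eq_one_iff p c
  -- the full character sum over F₀ vanishes for a ≠ 0
  have key : ∀ a : F₀, a ≠ 0 →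
      ∑ u : F₀, ψp (Algebra.trace (ZMod p) F₀ (u * a)) = 0 := by
    intro a ha
    set φ : AddChar F₀ ℂ := ψp.compAddMonoidHom
      ((Algebra.trace (ZMod p) F₀).toAddMonoidHom.comp (AddMonoidHom.mulRight a)) with hφdef
    have hφa : ∀ u : F₀, φ u = ψp (Algebra.trace (ZMod p) F₀ (u * a)) := fun u => rfl
    have hφ : φ ≠ 1 := by
      obtain ⟨b, hb⟩ : ∃ b : F₀, Algebra.trace (ZMod p) F₀ (b * a) ≠ 0 := by
        by_contra hf
        push_neg at hf
        refine ha ((traceForm_nondegenerate (ZMod p) F₀).1 a fun b => ?_)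
        simpa [Algebra.traceForm_apply, mul_comm] using hf b
      refine AddChar.ne_one_iff.2 ⟨b, ?_⟩
      rw [hφa b, Ne, hψ1]
      exact hb
    have := AddChar.sum_eq_zero_of_ne_one hφ
    simpa [hφa] using this
  -- the character sum over F₀ˣ
  have key2 : ∀ a : F₀, ∑ u : F₀ˣ, ψp (Algebra.trace (ZMod p) F₀ ((u : F₀) * a))
      = if a = 0 then ((q : ℂ) - 1) else -1 := by
    intro a
    have hq1 : (1 : ℕ) ≤ q := Fintype.card_pos
    split_ifs with h
    · subst h
      simp only [mul_zero, map_zero, AddChar.map_zero_eq_one]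
      rw [Finset.sum_const, Finset.card_univ, nsmul_eq_mul, mul_one, Fintype.card_units]
      push_cast [Nat.cast_sub (show 1 ≤ Fintype.card F₀ from hq1)]
      ring
    · have := sum_units_aux (fun u : F₀ => ψp (Algebra.trace (ZMod p) F₀ (u * a)))
      rw [key a h] at this
      simp only [zero_mul, map_zero, AddChar.map_zero_eq_one] at this
      linear_combination -this
  set G : ℂ := ∑ t : F, χ t * ψp (Algebra.trace (ZMod p) F t) with hGdef
  -- the goal sum equals G
  have hgoal : ∑ t : Fˣ, χ (t : F) * ψp (Algebra.trace (ZMod p) F (t : F)) = G := by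
    rw [hGdef, sum_units_aux (fun t : F => χ t * ψp (Algebra.trace (ZMod p) F t))]
    simp [MulChar.map_zero]
  -- Step A : reindexing by units of F₀
  have stepA : ∀ u : F₀ˣ,
      G = ∑ t : F, χ t * ψp (Algebra.trace (ZMod p) F₀ ((u : F₀) * Algebra.trace F₀ F t)) := by
    intro u
    have hu0 : algebraMap F₀ F (u : F₀) ≠ 0 := by
      exact fun h => u.ne_zero ((algebraMap F₀ F).injective (h.trans (map_zero _).symm))
    have := Fintype.sum_equiv (Equiv.mulRight₀ (algebraMap F₀ F (u : F₀)) hu0)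
      (fun t : F => χ t * ψp (Algebra.trace (ZMod p) F₀ ((u : F₀) * Algebra.trace F₀ F t)))
      (fun t : F => χ t * ψp (Algebra.trace (ZMod p) F t)) ?_
    · rw [hGdef, ← this]
    · intro t
      simp only [Equiv.mulRight₀_apply]
      have h1 : χ (t * algebraMap F₀ F (u : F₀)) = χ t := by
        rw [map_mul, hres u, mul_one]
      have h2 : Algebra.trace (ZMod p) F (t * algebraMap F₀ F (u : F₀))
          = Algebra.trace (ZMod p) F₀ ((u : F₀) * Algebra.trace F₀ F t) := by
        rw [← Algebra.trace_trace (S := F₀)]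
        congr 1
        rw [mul_comm, ← Algebra.smul_def, map_smul, smul_eq_mul]
      rw [h1, h2]
  -- Step B : multiply by q - 1
  have stepB : ((q : ℂ) - 1) * G
      = ∑ t : F, χ t * (if Algebra.trace F₀ F t = 0 then ((q : ℂ) - 1) else -1) := by
    have hcard : ((Fintype.card F₀ˣ : ℕ) : ℂ) = (q : ℂ) - 1 := by
      rw [Fintype.card_units]
      push_cast [Nat.cast_sub (Fintype.card_pos : (1:ℕ) ≤ q)]
      ring
    calc ((q : ℂ) - 1) * G = ∑ _u : F₀ˣ, G := by
          rw [Finset.sum_const, Finset.card_univ, nsmul_eq_mul, hcard]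
      _ = ∑ u : F₀ˣ, ∑ t : F,
            χ t * ψp (Algebra.trace (ZMod p) F₀ ((u : F₀) * Algebra.trace F₀ F t)) := by
          exact Finset.sum_congr rfl fun u _ => stepA u
      _ = ∑ t : F, ∑ u : F₀ˣ,
            χ t * ψp (Algebra.trace (ZMod p) F₀ ((u : F₀) * Algebra.trace F₀ F t)) :=
          Finset.sum_comm
      _ = ∑ t : F, χ t * (if Algebra.trace F₀ F t = 0 then ((q : ℂ) - 1) else -1) := by
          refine Finset.sum_congr rfl fun t _ => ?_
          rw [← Finset.mul_sum, key2]
  -- the kernel of the trace is the line spanned by x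
  have hker : LinearMap.ker (Algebra.trace F₀ F) = Submodule.span F₀ {x} := by
    have hxker : x ∈ LinearMap.ker (Algebra.trace F₀ F) := htr
    have hle : Submodule.span F₀ {x} ≤ LinearMap.ker (Algebra.trace F₀ F) :=
      (Submodule.span_singleton_le_iff_mem _ _).2 hxker
    have hsurj : Function.Surjective (Algebra.trace F₀ F) := Algebra.trace_surjective F₀ F
    have hrange : LinearMap.range (Algebra.trace F₀ F) = ⊤ := LinearMap.range_eq_top.2 hsurj
    have hrk := LinearMap.finrank_range_add_finrank_ker (Algebra.trace F₀ F)
    rw [hrange, finrank_top, Module.finrank_self, hquad] at hrk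
    have hkrk : Module.finrank F₀ (LinearMap.ker (Algebra.trace F₀ F)) = 1 := by omega
    exact (Submodule.eq_of_le_of_finrank_le hle
      (by rw [hkrk, finrank_span_singleton hx])).symm
  -- Step D : the sum over trace-zero elements
  have stepD : ∑ t : F, (if Algebra.trace F₀ F t = 0 then χ t else 0)
      = χ x * ((q : ℂ) - 1) := by
    have hset : Finset.univ.filter (fun t : F => Algebra.trace F₀ F t = 0)
        = Finset.image (fun c : F₀ => algebraMap F₀ F c * x) Finset.univ := by
      ext t
      simp only [Finset.mem_filter, Finset.mem_univ, true_and, Finset.mem_image]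
      constructor
      · intro h
        have : t ∈ Submodule.span F₀ {x} := by rw [← hker]; exact h
        obtain ⟨c, hc⟩ := Submodule.mem_span_singleton.1 this
        exact ⟨c, by rw [← Algebra.smul_def]; exact hc⟩
      · rintro ⟨c, rfl⟩
        have : algebraMap F₀ F c * x ∈ Submodule.span F₀ {x} := by
          rw [← Algebra.smul_def]
          exact Submodule.smul_mem _ _ (Submodule.mem_span_singleton_self x)
        rw [← hker] at this
        exact this
    have hinj : Set.InjOn (fun c : F₀ => algebraMap F₀ F c * x) ↑(Finset.univ : Finset F₀) := by
      intro a _ b _ hab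
      exact (algebraMap F₀ F).injective (mul_right_cancel₀ hx hab)
    rw [← Finset.sum_filter, hset, Finset.sum_image hinj]
    have : ∑ c : F₀, χ (algebraMap F₀ F c * x) = (∑ c : F₀, χ (algebraMap F₀ F c)) * χ x := by
      rw [Finset.sum_mul]
      exact Finset.sum_congr rfl fun c _ => by rw [map_mul]
    rw [this]
    have hsum : ∑ c : F₀, χ (algebraMap F₀ F c) = (q : ℂ) - 1 := by
      rw [sum_units_aux (fun c : F₀ => χ (algebraMap F₀ F c))]
      simp only [map_zero, MulChar.map_zero, zero_add]
      have : ∀ u : F₀ˣ, χ (algebraMap F₀ F (u : F₀)) = 1 := hres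
      rw [Finset.sum_congr rfl fun u _ => this u, Finset.sum_const, Finset.card_univ,
        nsmul_eq_mul, mul_one, Fintype.card_units]
      push_cast [Nat.cast_sub (Fintype.card_pos : (1:ℕ) ≤ q)]
      ring
    rw [hsum, mul_comm]
  -- combine
  have hchisum : ∑ t : F, χ t = 0 := χ.sum_eq_zero_of_ne_one hχ
  have hcomb : ((q : ℂ) - 1) * G = (q : ℂ) * (χ x * ((q : ℂ) - 1)) := by
    rw [stepB]
    have : ∀ t : F, χ t * (if Algebra.trace F₀ F t = 0 then ((q : ℂ) - 1) else -1)
        = -χ t + (q : ℂ) * (if Algebra.trace F₀ F t = 0 then χ t else 0) := by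
      intro t
      split_ifs <;> ring
    rw [Finset.sum_congr rfl fun t _ => this t, Finset.sum_add_distrib, Finset.sum_neg_distrib,
      hchisum, neg_zero, zero_add, ← Finset.mul_sum, stepD]
  have hq1 : ((q : ℂ) - 1) ≠ 0 := by
    have : (1 : ℕ) < q := Fintype.one_lt_card
    have : (q : ℂ) ≠ 1 := by exact_mod_cast this.ne'
    exact sub_ne_zero.2 this
  have hG : G = χ x * (q : ℂ) := by
    refine mul_left_cancel₀ hq1 (hcomb.trans ?_)
    ring
  rw [hgoal, hG]
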